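/- Let ω be a nonzero rational differential on a function field F of characteristic p, fixed by the iterated Cartier operator C_q (q = p^ℓ), let P be a place and s a positive integer. If v_P(ω) ≥ sq − 1 then v_P(ω) ≥ sq. -/
import Mathlib


section Aux
variable {F : Type*} [Field F] (vF : F → ℤ)
  (hv_mul : ∀ a b : F, a ≠ 0 → b ≠ 0 → vF (a * b) = vF a + vF b)
  (hv_add : ∀ a b : F, a ≠ 0 → b ≠ 0 → a + b ≠ 0 → min (vF a) (vF b) ≤ vF (a + b))

include hv_mul in
lemma vF_one : vF 1 = 0 := by
  have := hv_mul 1 1 one_ne_zero one_ne_zero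
  simp at this; linarith

include hv_mul in
lemma vF_neg (a : F) (ha : a ≠ 0) : vF (-a) = vF a := by
  have hm1 : vF (-1 : F) = 0 := by
    have := hv_mul (-1) (-1) (neg_ne_zero.2 one_ne_zero) (neg_ne_zero.2 one_ne_zero)
    simp at this
    have h1 := vF_one vF hv_mul
    linarith
  have := hv_mul (-1) a (neg_ne_zero.2 one_ne_zero) ha
  simpa [hm1] using this

include hv_mul hv_add in
lemma vF_add_ne (a b : F) (ha : a ≠ 0) (hb : b ≠ 0) (hne : vF a ≠ vF b) :
    a + b ≠ 0 ∧ vF (a + b) = min (vF a) (vF b) := by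
  have hs : a + b ≠ 0 := by
    intro h
    have : b = -a := by linear_combination h
    rw [this, vF_neg vF hv_mul a ha] at hne
    exact hne rfl
  refine ⟨hs, ?_⟩
  have h1 := hv_add a b ha hb hs
  rcases lt_or_gt_of_ne hne with h | h
  · have h2 : min (vF (a + b)) (vF (-b)) ≤ vF a := by
      have := hv_add (a + b) (-b) hs (neg_ne_zero.2 hb) (by simpa using ha)
      simpa using this
    rw [vF_neg vF hv_mul b hb] at h2
    have : vF (a + b) ≤ vF a := by
      rcases min_le_iff.1 h2 with h' | h'
      · exact h'
      · omega
    omega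
  · have h2 : min (vF (a + b)) (vF (-a)) ≤ vF b := by
      have h3 := hv_add (a + b) (-a) hs (neg_ne_zero.2 ha) (by
        intro hh
        apply hb
        linear_combination hh)
      have he : a + b + -a = b := by ring
      rwa [he] at h3
    rw [vF_neg vF hv_mul a ha] at h2
    have : vF (a + b) ≤ vF b := by
      rcases min_le_iff.1 h2 with h' | h'
      · exact h'
      · omega
    omega

include hv_mul hv_add in
lemma vF_sum {ι : Type*} (s : Finset ι) (f : ι → F)
    (h0 : ∀ i ∈ s, f i ≠ 0)
    (hd : ∀ i ∈ s, ∀ j ∈ s, i ≠ j → vF (f i) ≠ vF (f j))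
    (hne : s.Nonempty) :
    (∑ i ∈ s, f i) ≠ 0 ∧ ∃ i ∈ s, vF (∑ i ∈ s, f i) = vF (f i) := by
  induction s using Finset.cons_induction with
  | empty => simp at hne
  | cons a s has ih =>
    rcases s.eq_empty_or_nonempty with rfl | hs
    · refine ⟨by simpa using h0 a (by simp), a, by simp, by simp⟩
    · obtain ⟨hsum0, i, hi, hvi⟩ := ih (fun i hi => h0 i (by simp [hi]))
        (fun i hi j hj hij => hd i (by simp [hi]) j (by simp [hj]) hij) hs
      have ha0 : f a ≠ 0 := h0 a (by simp)
      have hav : vF (f a) ≠ vF (∑ i ∈ s, f i) := by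
        rw [hvi]
        exact hd a (by simp) i (by simp [hi]) (by rintro rfl; exact has hi)
      obtain ⟨h1, h2⟩ := vF_add_ne vF hv_mul hv_add (f a) (∑ i ∈ s, f i) ha0 hsum0 hav
      rw [Finset.sum_cons]
      refine ⟨h1, ?_⟩
      rcases min_cases (vF (f a)) (vF (∑ i ∈ s, f i)) with ⟨hm, _⟩ | ⟨hm, _⟩
      · exact ⟨a, by simp, by rw [h2, hm]⟩
      · exact ⟨i, by simp [hi], by rw [h2, hm, hvi]⟩

include hv_mul in
lemma vF_pow (a : F) (ha : a ≠ 0) (n : ℕ) : vF (a ^ n) = n * vF a := by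
  induction n with
  | zero => simpa using vF_one vF hv_mul
  | succ n ih =>
    rw [pow_succ, hv_mul _ _ (pow_ne_zero n ha) ha, ih]
    push_cast; ring

end Aux

lemma int_dvd_small {q a : ℤ} (hq : 0 < q) (h : q ∣ a) (h1 : -q < a) (h2 : a < q) :
    a = 0 := by
  obtain ⟨t, rfl⟩ := h
  have ht1 : t < 1 := lt_of_mul_lt_mul_left (by linarith) hq.le
  have ht2 : -1 < t := lt_of_mul_lt_mul_left (by linarith) hq.le
  have : t = 0 := by omega
  simp [this]

lemma cartier_step {p : ℕ} (hp : p.Prime)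
    {F : Type*} [Field F]
    {Ω : Type*} [AddCommGroup Ω] [Module F Ω]
    (d : F → Ω) (z : F) (vF : F → ℤ)
    (hv_mul : ∀ a b : F, a ≠ 0 → b ≠ 0 → vF (a * b) = vF a + vF b)
    (hv_add : ∀ a b : F, a ≠ 0 → b ≠ 0 → a + b ≠ 0 → min (vF a) (vF b) ≤ vF (a + b))
    (hz : vF z = 1) (hz0 : z ≠ 0)
    (hdec : ∀ g : F, ∃ c : Fin p → F, g = ∑ i : Fin p, (c i) ^ p * z ^ (i : ℕ))
    (C : Ω → Ω)
    (hC : ∀ c : Fin p → F,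
      C ((∑ i : Fin p, (c i) ^ p * z ^ (i : ℕ)) • d z)
        = c ⟨p - 1, Nat.sub_lt hp.pos Nat.one_pos⟩ • d z)
    (g : F) (hg : g ≠ 0) (m : ℤ) (hvg : vF g = m * p - 1) :
    ∃ c' : F, C (g • d z) = c' • d z ∧ c' ≠ 0 ∧ vF c' = m - 1 := by
  classical
  obtain ⟨c, hc⟩ := hdec g
  set f : Fin p → F := fun i => c i ^ p * z ^ (i : ℕ) with hf
  set S : Finset (Fin p) := Finset.univ.filter (fun i => c i ≠ 0) with hS
  have hmemS : ∀ i, i ∈ S ↔ c i ≠ 0 := by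
    intro i; simp [hS]
  have hgS : g = ∑ i ∈ S, f i := by
    rw [hc]
    symm
    apply Finset.sum_filter_of_ne
    intro i _ hfi hci
    apply hfi
    simp [hf, hci, zero_pow hp.pos.ne']
  have hf0 : ∀ i ∈ S, f i ≠ 0 := by
    intro i hi
    exact mul_ne_zero (pow_ne_zero _ ((hmemS i).1 hi)) (pow_ne_zero _ hz0)
  have hvf : ∀ i ∈ S, vF (f i) = p * vF (c i) + i := by
    intro i hi
    have hci := (hmemS i).1 hi
    show vF (c i ^ p * z ^ (i : ℕ)) = _
    rw [hv_mul _ _ (pow_ne_zero _ hci) (pow_ne_zero _ hz0),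
      vF_pow vF hv_mul _ hci, vF_pow vF hv_mul _ hz0, hz]
    ring
  have hp0 : (0:ℤ) < p := by exact_mod_cast hp.pos
  have hdist : ∀ i ∈ S, ∀ j ∈ S, i ≠ j → vF (f i) ≠ vF (f j) := by
    intro i hi j hj hij heq
    rw [hvf i hi, hvf j hj] at heq
    have hdvd : (p:ℤ) ∣ ((j:ℤ) - (i:ℤ)) := ⟨vF (c i) - vF (c j), by linarith⟩
    have hip : ((i:ℕ):ℤ) < p := by exact_mod_cast i.isLt
    have hjp : ((j:ℕ):ℤ) < p := by exact_mod_cast j.isLt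
    have h0i : (0:ℤ) ≤ (i:ℕ) := by positivity
    have h0j : (0:ℤ) ≤ (j:ℕ) := by positivity
    have := int_dvd_small hp0 hdvd (by omega) (by omega)
    have : (i:ℕ) = (j:ℕ) := by omega
    exact hij (Fin.ext this)
  have hSne : S.Nonempty := by
    rcases S.eq_empty_or_nonempty with h | h
    · exfalso; apply hg; rw [hgS, h]; simp
    · exact h
  obtain ⟨-, i₀, hi₀, hvgi⟩ := vF_sum vF hv_mul hv_add S f hf0 hdist hSne
  rw [← hgS] at hvgi
  rw [hvg, hvf i₀ hi₀] at hvgi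
  set k := vF (c i₀) with hk
  have heq2 : (p:ℤ) * (m - 1 - k) = (i₀:ℤ) - ((p:ℤ) - 1) := by linarith
  have hip : ((i₀:ℕ):ℤ) < p := by exact_mod_cast i₀.isLt
  have h0i : (0:ℤ) ≤ ((i₀:ℕ):ℤ) := by positivity
  have hzero := int_dvd_small hp0 ⟨m - 1 - k, heq2.symm⟩ (by omega) (by omega)
  have hi0eq : (i₀:ℕ) = p - 1 := by omega
  have hkeq : k = m - 1 := by
    have : (p:ℤ) * (m - 1 - k) = 0 := by omega
    rcases mul_eq_zero.1 this with h | h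
    · omega
    · omega
  have hi0fin : i₀ = ⟨p - 1, Nat.sub_lt hp.pos Nat.one_pos⟩ := Fin.ext (by simp [hi0eq])
  refine ⟨c i₀, ?_, (hmemS i₀).1 hi₀, by rw [← hk, hkeq]⟩
  rw [hc, hC c, hi0fin]



/-- key vanishing lemma. Let `q = p^ℓ` and let `ω` be a nonzero
rational differential fixed by the iterated Cartier operator `C_q = C^ℓ`. If
`v_P(ω) ≥ sq - 1` for some positive integer `s`, then `v_P(ω) ≥ sq`. -/
theorem cartier_fixed_vanishing
    {p : ℕ} (hp : p.Prime)
    {F : Type*} [Field F] [CharP F p]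
    {Ω : Type*} [AddCommGroup Ω] [Module F Ω]
    -- the universal derivation on rational differential forms
    (d : F → Ω)
    (hd_add : ∀ a b : F, d (a + b) = d a + d b)
    (hd_mul : ∀ a b : F, d (a * b) = a • d b + b • d a)
    -- `z` is a uniformizing parameter at the place `P` (hence a separating element)
    (z : F)
    -- `vF` is the discrete valuation of `F` at the place `P`
    (vF : F → ℤ)
    (hv_mul : ∀ a b : F, a ≠ 0 → b ≠ 0 → vF (a * b) = vF a + vF b)
    (hv_add : ∀ a b : F, a ≠ 0 → b ≠ 0 → a + b ≠ 0 → min (vF a) (vF b) ≤ vF (a + b))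
    (hz : vF z = 1)
    (hbasis : ∀ ω : Ω, ∃! g : F, ω = g • d z)
    (hdec : ∀ g : F, ∃ c : Fin p → F, g = ∑ i : Fin p, (c i) ^ p * z ^ (i : ℕ))
    -- `vΩ` is the valuation of differentials at `P`
    (vΩ : Ω → ℤ)
    (hvΩ : ∀ g : F, g ≠ 0 → vΩ (g • d z) = vF g)
    -- the Cartier operator
    (C : Ω → Ω)
    (hC : ∀ c : Fin p → F,
      C ((∑ i : Fin p, (c i) ^ p * z ^ (i : ℕ)) • d z)
        = c ⟨p - 1, Nat.sub_lt hp.pos Nat.one_pos⟩ • d z)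
    (ℓ : ℕ) (hℓ : 1 ≤ ℓ) :
    ∀ ω : Ω, ω ≠ 0 → C^[ℓ] ω = ω →
      ∀ s : ℤ, 1 ≤ s → s * (p : ℤ) ^ ℓ - 1 ≤ vΩ ω → s * (p : ℤ) ^ ℓ ≤ vΩ ω := by
  intro ω hω hfix s hs hge
  by_contra hlt
  push_neg at hlt
  have hveq : vΩ ω = s * (p:ℤ) ^ ℓ - 1 := by omega
  have hz0 : z ≠ 0 := by
    intro h
    have hd00 : d (0:F) = 0 := by
      have h2 := hd_add 0 0
      rw [add_zero] at h2
      exact (left_eq_add.mp h2)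
    have hdz : d z = 0 := by rw [h]; exact hd00
    obtain ⟨g, -, hu⟩ := hbasis 0
    have h0 := hu 0 (by simp)
    have h1 := hu 1 (by simp [hdz])
    exact one_ne_zero (h1.trans h0.symm)
  have key : ∀ k, k ≤ ℓ → ∃ g : F, C^[k] ω = g • d z ∧ g ≠ 0 ∧
      vF g = s * (p:ℤ) ^ (ℓ - k) - 1 := by
    intro k
    induction k with
    | zero =>
      intro _
      obtain ⟨g, hgω, -⟩ := hbasis ω
      have hg0 : g ≠ 0 := by
        rintro rfl
        apply hω
        rw [hgω, zero_smul]
      refine ⟨g, by simpa using hgω, hg0, ?_⟩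
      have := hvΩ g hg0
      rw [← hgω] at this
      rw [← this, hveq]
      simp
    | succ k ih =>
      intro hk
      obtain ⟨g, hgk, hg0, hvg⟩ := ih (by omega)
      have hsplit : vF g = (s * (p:ℤ) ^ (ℓ - (k + 1))) * p - 1 := by
        rw [hvg]
        have h1 : ℓ - k = (ℓ - (k + 1)) + 1 := by omega
        rw [h1, pow_succ]
        ring
      obtain ⟨c, hCc, hc0, hvc⟩ := cartier_step hp d z vF hv_mul hv_add hz hz0
        hdec C hC g hg0 (s * (p:ℤ) ^ (ℓ - (k + 1))) hsplit
      exact ⟨c, by rw [Function.iterate_succ_apply', hgk, hCc], hc0, hvc⟩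
  obtain ⟨g, hgℓ, hg0, hvg⟩ := key ℓ le_rfl
  rw [hfix] at hgℓ
  have hωv : vΩ ω = s - 1 := by
    rw [hgℓ, hvΩ g hg0, hvg]
    simp
  have hq2 : (2:ℤ) ≤ (p:ℤ) ^ ℓ := by
    calc (2:ℤ) ≤ (p:ℤ) := by exact_mod_cast hp.two_le
    _ ≤ (p:ℤ) ^ ℓ := le_self_pow₀ (by exact_mod_cast hp.one_lt.le) (by omega)
  nlinarith [hveq, hωv, hs, hq2]
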